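/- Let (p̂_1,…,p̂_m) be a family of [0,1]-valued random variables that is PRDS on the set H0 of null indices of cardinality m0, and suppose that for every null index i and every k ∈ {1,…,m}, P(p̂_i ≤ αk/m) ≤ αk/m. Then the FDR of the BH procedure at level α applied to (p̂_1,…,p̂_m) satisfies FDR ≤ m0·α/m. -/

import Mathlib

set_option maxHeartbeats 800000


open MeasureTheory ProbabilityTheory Finset
open scoped Classical ENNReal

/-- Hypothesis `i` is rejected by the Benjamini–Hochberg procedure at level `α`. -/
def bhRejects (m : ℕ) (α : ℝ) (p : Fin m → ℝ) (i : Fin m) : Prop :=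
  ∃ k ∈ Finset.Icc 1 m,
    p i ≤ α * k / m ∧
      k ≤ (Finset.univ.filter fun j => p j ≤ α * (k : ℝ) / m).card

/-- Number of rejections of the BH procedure at level `α`. -/
noncomputable def bhR (m : ℕ) (α : ℝ) (p : Fin m → ℝ) : ℕ :=
  (Finset.univ.filter fun i => bhRejects m α p i).card

set_option linter.unusedSectionVars false

noncomputable def cnt (m : ℕ) (α : ℝ) (k : ℕ) (x : Fin m → ℝ) : ℕ :=
  (Finset.univ.filter fun j => x j ≤ α * (k : ℝ) / m).card

noncomputable def khat (m : ℕ) (α : ℝ) (x : Fin m → ℝ) : ℕ :=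
  (Finset.Icc 1 m).sup fun k => if k ≤ cnt m α k x then k else 0

set_option linter.unusedSectionVars false
section Comb
variable {m : ℕ} {α : ℝ}

lemma cnt_mono (hα : 0 < α) {k k' : ℕ} (hkk : k ≤ k') (x : Fin m → ℝ) : cnt m α k x ≤ cnt m α k' x := by
  apply Finset.card_le_card
  intro j hj
  simp only [Finset.mem_filter] at *
  refine ⟨hj.1, hj.2.trans ?_⟩
  gcongr <;> first | exact hα.le | exact_mod_cast hkk | positivity

lemma cnt_le (k : ℕ) (x : Fin m → ℝ) : cnt m α k x ≤ m := by
  simpa [cnt] using (Finset.card_filter_le Finset.univ fun j => x j ≤ α * (k : ℝ) / m)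

lemma cnt_anti {x y : Fin m → ℝ} (hxy : ∀ j, x j ≤ y j) (k : ℕ) :
    cnt m α k y ≤ cnt m α k x := by
  apply Finset.card_le_card
  intro j hj
  simp only [Finset.mem_filter] at *
  exact ⟨hj.1, (hxy j).trans hj.2⟩

lemma le_khat {k : ℕ} (hk : k ∈ Finset.Icc 1 m) (x : Fin m → ℝ)
    (h : k ≤ cnt m α k x) : k ≤ khat m α x := by
  have := Finset.le_sup (f := fun k => if k ≤ cnt m α k x then k else 0) hk
  simpa [khat, if_pos h] using this

lemma khat_le (x : Fin m → ℝ) : khat m α x ≤ m := by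
  apply Finset.sup_le
  intro k hk
  split
  · exact (Finset.mem_Icc.mp hk).2
  · exact Nat.zero_le m

lemma khat_cnt (hm : 0 < m) (x : Fin m → ℝ) (h : 1 ≤ khat m α x) :
    khat m α x ≤ cnt m α (khat m α x) x := by
  have hne : (Finset.Icc 1 m).Nonempty := ⟨1, Finset.mem_Icc.mpr ⟨le_refl 1, hm⟩⟩
  obtain ⟨k, hk, hkeq⟩ := Finset.exists_mem_eq_sup (Finset.Icc 1 m) hne
    (fun k => if k ≤ cnt m α k x then k else 0)
  by_cases hc : k ≤ cnt m α k x
  · have hk2 : khat m α x = k := by rw [khat, hkeq, if_pos hc]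
    rw [hk2]; exact hc
  · have hk2 : khat m α x = 0 := by rw [khat, hkeq, if_neg hc]
    omega

lemma cnt_khat_eq (hα : 0 < α) (hm : 0 < m) (x : Fin m → ℝ) (h : 1 ≤ khat m α x) :
    cnt m α (khat m α x) x = khat m α x := by
  refine le_antisymm ?_ (khat_cnt hm x h)
  by_contra hcon
  push_neg at hcon
  have h2 := cnt_mono hα (le_of_lt hcon) x
  have hr1 : 1 ≤ cnt m α (khat m α x) x := by omega
  have hrm : cnt m α (khat m α x) x ≤ m := cnt_le _ x
  have := le_khat (Finset.mem_Icc.mpr ⟨hr1, hrm⟩) x h2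
  omega

lemma rejects_iff (hα : 0 < α) (hm : 0 < m) (x : Fin m → ℝ) (i : Fin m) :
    bhRejects m α x i ↔ 1 ≤ khat m α x ∧ x i ≤ α * (khat m α x : ℝ) / m := by
  constructor
  · rintro ⟨k, hk, hpi, hcnt⟩
    have hkh : k ≤ khat m α x := le_khat hk x hcnt
    have h1 : 1 ≤ khat m α x := le_trans (Finset.mem_Icc.mp hk).1 hkh
    refine ⟨h1, le_trans hpi ?_⟩
    gcongr <;> first | exact hα.le | exact_mod_cast hkh | positivity
  · rintro ⟨h1, hpi⟩
    exact ⟨khat m α x, Finset.mem_Icc.mpr ⟨h1, khat_le x⟩, hpi, khat_cnt hm x h1⟩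

lemma bhR_eq (hα : 0 < α) (hm : 0 < m) (x : Fin m → ℝ) : bhR m α x = khat m α x := by
  rcases Nat.eq_zero_or_pos (khat m α x) with h0 | h1
  · rw [bhR, h0]
    rw [Finset.card_eq_zero, Finset.filter_eq_empty_iff]
    intro i _
    rw [rejects_iff hα hm]
    omega
  · rw [bhR]
    have heq : (Finset.univ.filter fun i => bhRejects m α x i)
        = Finset.univ.filter fun i => x i ≤ α * (khat m α x : ℝ) / m := by
      apply Finset.filter_congr
      intro i _
      rw [rejects_iff hα hm]
      exact and_iff_right h1
    rw [heq]
    exact cnt_khat_eq hα hm x h1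

lemma khat_anti {x y : Fin m → ℝ} (hxy : ∀ j, x j ≤ y j) :
    khat m α y ≤ khat m α x := by
  apply Finset.sup_le
  intro k hk
  split
  · next h => exact le_khat hk x (le_trans h (cnt_anti hxy k))
  · exact Nat.zero_le _

lemma measurable_cnt (k : ℕ) : Measurable fun x : Fin m → ℝ => cnt m α k x := by
  have h : ∀ x : Fin m → ℝ, cnt m α k x = ∑ j : Fin m, if x j ≤ α * (k : ℝ) / m then 1 else 0 := by
    intro x; rw [cnt, Finset.card_filter]
  simp_rw [h]
  apply Finset.measurable_sum
  intro j _
  exact Measurable.ite (measurableSet_le (measurable_pi_apply j) measurable_const)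
    measurable_const measurable_const

lemma measurable_khat : Measurable fun x : Fin m → ℝ => khat m α x := by
  have key : ∀ s : Finset ℕ, Measurable fun x : Fin m → ℝ =>
      s.sup fun k => if k ≤ cnt m α k x then k else 0 := by
    intro s
    induction s using Finset.induction with
    | empty => simpa using measurable_const
    | @insert a s ha ih =>
      simp_rw [Finset.sup_insert]
      refine Measurable.sup (Measurable.ite ?_ measurable_const measurable_const) ih
      exact measurable_cnt (m := m) (α := α) a MeasurableSpace.measurableSet_top
  exact key _

lemma measurable_bhR (hα : 0 < α) (hm : 0 < m) : Measurable fun x : Fin m → ℝ => bhR m α x := by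
  have h : (fun x : Fin m → ℝ => bhR m α x) = fun x => khat m α x := by
    funext x; exact bhR_eq hα hm x
  rw [h]; exact measurable_khat

end Comb


/-- Number of false positives (rejected null hypotheses) of BH at level `α`. -/
noncomputable def bhFP (m : ℕ) (α : ℝ) (H0 : Finset (Fin m)) (p : Fin m → ℝ) : ℕ :=
  (H0.filter fun i => bhRejects m α p i).card

/-- False discovery proportion of BH at level `α` (with the convention 0/0 = 0). -/
noncomputable def bhFDP (m : ℕ) (α : ℝ) (H0 : Finset (Fin m)) (p : Fin m → ℝ) : ℝ :=
  (bhFP m α H0 p : ℝ) / (bhR m α p : ℝ)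

/-- A set `A ⊆ ℝ^m` is nondecreasing if it is upward closed for the componentwise order. -/
def IsNondecreasingSet {m : ℕ} (A : Set (Fin m → ℝ)) : Prop :=
  ∀ x ∈ A, ∀ y : Fin m → ℝ, (∀ j, x j ≤ y j) → y ∈ A

/-- The family of random variables `p` is PRDS on `I0`: for every `i ∈ I0` and every
nondecreasing measurable set `A`, the conditional probability `u ↦ P[p ∈ A | pᵢ = u]` is
nondecreasing in `u` (formalized via a monotone version of the conditional expectation of
the indicator of `A` given `pᵢ`). -/
def PRDSOn {Ω : Type*} [MeasurableSpace Ω] (μ : Measure Ω) {m : ℕ}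
    (p : Fin m → Ω → ℝ) (I0 : Finset (Fin m)) : Prop :=
  ∀ i ∈ I0, ∀ A : Set (Fin m → ℝ), MeasurableSet A → IsNondecreasingSet A →
    ∃ g : ℝ → ℝ, Monotone g ∧
      (fun ω => g (p i ω))
        =ᵐ[μ] μ[(A.indicator fun _ => (1 : ℝ)) ∘ (fun ω j => p j ω) |
                 MeasurableSpace.comap (p i) inferInstance]

lemma prds_key {Ω : Type*} [MeasurableSpace Ω] (μ : Measure Ω) [IsProbabilityMeasure μ]
    {m : ℕ} {p : Fin m → Ω → ℝ} (hmeas : ∀ i, Measurable (p i))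
    {H0 : Finset (Fin m)} (hprds : PRDSOn μ p H0) {i : Fin m} (hi : i ∈ H0)
    {A : Set (Fin m → ℝ)} (hA : MeasurableSet A) (hA2 : IsNondecreasingSet A)
    {u u' : ℝ} (huu : u ≤ u') :
    (μ ((fun ω j => p j ω) ⁻¹' A ∩ p i ⁻¹' Set.Iic u)).toReal *
      (μ (p i ⁻¹' Set.Iic u')).toReal ≤
    (μ ((fun ω j => p j ω) ⁻¹' A ∩ p i ⁻¹' Set.Iic u')).toReal *
      (μ (p i ⁻¹' Set.Iic u)).toReal := by
  obtain ⟨g, hgmono, hgae⟩ := hprds i hi A hA hA2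
  set Pvec : Ω → (Fin m → ℝ) := fun ω j => p j ω with hPvecdef
  have hPvec : Measurable Pvec := measurable_pi_lambda _ hmeas
  set f : Ω → ℝ := (A.indicator fun _ => (1 : ℝ)) ∘ Pvec with hfdef
  have hA' : MeasurableSet (Pvec ⁻¹' A) := hPvec hA
  have hfind : f = (Pvec ⁻¹' A).indicator fun _ => (1 : ℝ) := by
    funext ω
    simp only [hfdef, Function.comp_apply, Set.indicator, Set.mem_preimage]
  have hfint : Integrable f μ := by
    rw [hfind]
    exact (integrable_const (1 : ℝ)).indicator hA'
  have hm_le : MeasurableSpace.comap (p i) inferInstance ≤ _ := (hmeas i).comap_le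
  set B : Set Ω := p i ⁻¹' Set.Iic u with hBdef
  set B' : Set Ω := p i ⁻¹' Set.Iic u' with hB'def
  have hBc : MeasurableSet[MeasurableSpace.comap (p i) inferInstance] B :=
    ⟨Set.Iic u, measurableSet_Iic, rfl⟩
  have hB'c : MeasurableSet[MeasurableSpace.comap (p i) inferInstance] B' :=
    ⟨Set.Iic u', measurableSet_Iic, rfl⟩
  have hB : MeasurableSet B := (hmeas i) measurableSet_Iic
  have hB' : MeasurableSet B' := (hmeas i) measurableSet_Iic
  have hBB' : B ⊆ B' := fun ω hw => le_trans hw huu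
  have hgint : Integrable (fun ω => g (p i ω)) μ :=
    (integrable_condExp).congr hgae.symm
  -- set integrals of f equal integrals of g ∘ p i
  have hsetint : ∀ (C : Set Ω), MeasurableSet[MeasurableSpace.comap (p i) inferInstance] C →
      ∫ ω in C, g (p i ω) ∂μ = (μ (Pvec ⁻¹' A ∩ C)).toReal := by
    intro C hC
    have h1 : ∫ ω in C, g (p i ω) ∂μ = ∫ ω in C, (μ[f | MeasurableSpace.comap (p i) inferInstance]) ω ∂μ :=
      setIntegral_congr_ae (hm_le C hC) (hgae.mono fun ω hω _ => hω)
    rw [h1, setIntegral_condExp hm_le hfint hC, hfind,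
      setIntegral_indicator hA']
    simp [Measure.restrict_apply hA', Set.inter_comm, measureReal_def]
  have hIB := hsetint B hBc
  have hIB' := hsetint B' hB'c
  -- abbreviations
  set I : ℝ := ∫ ω in B, g (p i ω) ∂μ with hI
  set I' : ℝ := ∫ ω in B', g (p i ω) ∂μ with hI'
  set a : ℝ := (μ B).toReal with ha
  set a' : ℝ := (μ B').toReal with ha'
  have hann : 0 ≤ a := ENNReal.toReal_nonneg
  have hd0 : 0 ≤ a' - a := by
    have := measure_mono (μ := μ) hBB'
    have h2 : (μ B).toReal ≤ (μ B').toReal :=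
      ENNReal.toReal_mono (measure_ne_top μ B') this
    linarith
  -- I ≤ g u * a
  have h1 : I ≤ g u * a := by
    rw [hI]
    calc ∫ ω in B, g (p i ω) ∂μ ≤ ∫ _ω in B, g u ∂μ := by
          apply setIntegral_mono_on hgint.integrableOn (integrableOn_const (measure_ne_top μ B)) hB
          intro ω hω
          exact hgmono hω
      _ = g u * a := by rw [setIntegral_const, smul_eq_mul, ha, measureReal_def]; ring
  -- I' - I ≥ g u * (a' - a)
  have hsplit : I' = I + ∫ ω in B' \ B, g (p i ω) ∂μ := by
    rw [hI, hI', ← setIntegral_union (Set.disjoint_sdiff_right) (hB'.diff hB)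
      hgint.integrableOn hgint.integrableOn, Set.union_diff_cancel hBB']
  have hmd : (μ (B' \ B)).toReal = a' - a := by
    rw [measure_diff hBB' hB.nullMeasurableSet (measure_ne_top μ B),
      ENNReal.toReal_sub_of_le (measure_mono hBB') (measure_ne_top μ B')]
  have h2 : g u * (a' - a) ≤ I' - I := by
    rw [hsplit]
    have : ∫ _ω in B' \ B, g u ∂μ ≤ ∫ ω in B' \ B, g (p i ω) ∂μ := by
      apply setIntegral_mono_on (integrableOn_const (measure_ne_top μ _))
        hgint.integrableOn (hB'.diff hB)
      intro ω hω
      have hnot : ¬ p i ω ≤ u := hω.2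
      exact hgmono (not_le.mp hnot).le
    rw [setIntegral_const, measureReal_def, hmd] at this
    have h3 : g u * (a' - a) ≤ ∫ ω in B' \ B, g (p i ω) ∂μ := by
      calc g u * (a' - a) = (a' - a) • g u := by rw [smul_eq_mul]; ring
        _ ≤ _ := this
    linarith
  -- conclude
  rw [← hIB, ← hIB']
  nlinarith [mul_le_mul_of_nonneg_right h1 hd0, mul_le_mul_of_nonneg_left h2 hann]


theorem prds_bh_fdr_control
    {Ω : Type*} [MeasurableSpace Ω] (μ : Measure Ω) [IsProbabilityMeasure μ]
    (m m0 : ℕ) (hm : 0 < m) (H0 : Finset (Fin m)) (hcard : H0.card = m0)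
    (p : Fin m → Ω → ℝ) (hmeas : ∀ i, Measurable (p i))
    (hrange : ∀ i ω, p i ω ∈ Set.Icc (0 : ℝ) 1)
    (α : ℝ) (hα : α ∈ Set.Ioc (0 : ℝ) 1)
    (hprds : PRDSOn μ p H0)
    (hsuper : ∀ i ∈ H0, ∀ k ∈ Finset.Icc 1 m,
      μ {ω | p i ω ≤ α * k / m} ≤ ENNReal.ofReal (α * k / m)) :
    ∫ ω, bhFDP m α H0 (fun i => p i ω) ∂μ ≤ m0 * α / m := by
  obtain ⟨hα0, hα1⟩ := hα
  have hmR : (0:ℝ) < m := by exact_mod_cast hm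
  have hc : 0 < α / m := div_pos hα0 hmR
  set Pvec : Ω → (Fin m → ℝ) := fun ω j => p j ω with hPvecdef
  have hPvec : Measurable Pvec := measurable_pi_lambda _ hmeas
  set q : ℕ → ℝ := fun k => α * k / m with hqdef
  have hq0 : ∀ k : ℕ, (0:ℝ) ≤ q k := by
    intro k; rw [hqdef]; positivity
  have hqmono : ∀ k : ℕ, q k ≤ q (k+1) := by
    intro k
    rw [hqdef]
    simp only
    gcongr <;> first | exact hα0.le | push_cast; linarith | positivity
  -- the nondecreasing sets A n
  set A : ℕ → Set (Fin m → ℝ) := fun n => {x | bhR m α x ≤ n} with hAdef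
  have hAmeas : ∀ n, MeasurableSet (A n) := fun n =>
    measurable_bhR hα0 hm (MeasurableSpace.measurableSet_top (s := Set.Iic n))
  have hAmono : ∀ n, IsNondecreasingSet (A n) := by
    intro n x hx y hxy
    have h2 : bhR m α y ≤ bhR m α x := by
      rw [bhR_eq hα0 hm, bhR_eq hα0 hm]; exact khat_anti hxy
    exact le_trans h2 hx
  have hAsub : ∀ n, A n ⊆ A (n+1) := fun n x hx => le_trans hx (Nat.le_succ n)
  -- the events E i k
  set E : Fin m → ℕ → Set Ω :=
    fun i k => {ω | p i ω ≤ q k} ∩ {ω | bhR m α (Pvec ω) = k} with hEdef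
  have hEmeas : ∀ i k, MeasurableSet (E i k) := by
    intro i k
    exact ((hmeas i) measurableSet_Iic).inter
      (((measurable_bhR hα0 hm).comp hPvec) (MeasurableSpace.measurableSet_top (s := {k})))
  -- pointwise identity
  have hpt : ∀ ω, bhFDP m α H0 (fun i => p i ω)
      = ∑ i ∈ H0, ∑ k ∈ Finset.Icc 1 m, (E i k).indicator (fun _ => 1 / (k:ℝ)) ω := by
    intro ω
    simp only [bhFDP]
    set r := bhR m α (fun i => p i ω) with hr
    have hKr : khat m α (fun i => p i ω) = r := by rw [hr, bhR_eq hα0 hm]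
    have hrle : r ≤ m := by rw [← hKr]; exact khat_le _
    rcases Nat.eq_zero_or_pos r with hr0 | hr1
    · have hFP : bhFP m α H0 (fun i => p i ω) = 0 := by
        rw [bhFP, Finset.card_eq_zero, Finset.filter_eq_empty_iff]
        intro i _
        rw [rejects_iff hα0 hm, hKr]
        omega
      rw [hFP]
      simp only [Nat.cast_zero, zero_div]
      symm
      apply Finset.sum_eq_zero
      intro i _
      apply Finset.sum_eq_zero
      intro k hk
      apply Set.indicator_of_notMem
      rintro ⟨-, h2⟩
      rw [Finset.mem_Icc] at hk
      have : r = k := by rw [hr]; exact h2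
      omega
    · have hrIcc : r ∈ Finset.Icc 1 m := Finset.mem_Icc.mpr ⟨hr1, hrle⟩
      have hReq : ∀ j, bhRejects m α (fun i => p i ω) j ↔ p j ω ≤ α * (r:ℝ) / m := by
        intro j
        rw [rejects_iff hα0 hm, hKr]
        exact and_iff_right hr1
      have hFPsum : ((bhFP m α H0 fun i => p i ω : ℕ) : ℝ)
          = ∑ j ∈ H0, if p j ω ≤ α * (r:ℝ) / m then (1:ℝ) else 0 := by
        have h2 : bhFP m α H0 (fun i => p i ω)
            = ∑ j ∈ H0, if p j ω ≤ α * (r:ℝ) / m then 1 else 0 := by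
          rw [bhFP, Finset.card_filter]
          refine Finset.sum_congr rfl fun j _ => ?_
          by_cases h : bhRejects m α (fun i => p i ω) j
          · rw [if_pos h, if_pos ((hReq j).mp h)]
          · rw [if_neg h, if_neg fun hh => h ((hReq j).mpr hh)]
        rw [h2]
        push_cast
        rfl
      rw [hFPsum, Finset.sum_div]
      refine Finset.sum_congr rfl fun j _ => ?_
      have hsingle : ∑ k ∈ Finset.Icc 1 m, (E j k).indicator (fun _ => 1 / (k:ℝ)) ω
          = (E j r).indicator (fun _ => 1 / (r:ℝ)) ω := by
        refine Finset.sum_eq_single_of_mem r hrIcc fun b _ hbr => ?_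
        apply Set.indicator_of_notMem
        rintro ⟨-, h2⟩
        exact hbr (by rw [← h2, hr])
      rw [hsingle]
      by_cases hple : p j ω ≤ α * (r:ℝ) / m
      · rw [if_pos hple,
          Set.indicator_of_mem (show ω ∈ E j r from ⟨hple, hr.symm⟩) (fun _ => 1 / (r:ℝ))]
      · rw [if_neg hple, Set.indicator_of_notMem (fun hmem => hple hmem.1), zero_div]
  -- rewrite the integral
  have hint : ∫ ω, bhFDP m α H0 (fun i => p i ω) ∂μ
      = ∑ i ∈ H0, ∑ k ∈ Finset.Icc 1 m, (μ (E i k)).toReal * (1 / (k:ℝ)) := by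
    rw [integral_congr_ae (Filter.Eventually.of_forall hpt)]
    rw [integral_finset_sum _ (fun i _ => integrable_finset_sum _
      (fun (k : ℕ) _ => (integrable_const (1 / (k:ℝ))).indicator (hEmeas i k)))]
    refine Finset.sum_congr rfl fun i _ => ?_
    rw [integral_finset_sum _ (fun (k : ℕ) _ => (integrable_const (1 / (k:ℝ))).indicator (hEmeas i k))]
    refine Finset.sum_congr rfl fun k _ => ?_
    rw [integral_indicator_const _ (hEmeas i k), smul_eq_mul, measureReal_def]
  rw [hint]
  -- per-null-index bound
  have key : ∀ i ∈ H0, ∑ k ∈ Finset.Icc 1 m, (μ (E i k)).toReal * (1 / (k:ℝ)) ≤ α / m := by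
    intro i hi
    set F : ℕ → ℝ → ℝ := fun n u => (μ (Pvec ⁻¹' A n ∩ p i ⁻¹' Set.Iic u)).toReal with hF
    set b : ℝ → ℝ := fun u => (μ (p i ⁻¹' Set.Iic u)).toReal with hb
    have hF0 : ∀ n u, 0 ≤ F n u := fun n u => ENNReal.toReal_nonneg
    have hb0 : ∀ u, 0 ≤ b u := fun u => ENNReal.toReal_nonneg
    have hFb : ∀ n u, F n u ≤ b u := fun n u =>
      ENNReal.toReal_mono (measure_ne_top μ _) (measure_mono Set.inter_subset_right)
    have hFn : ∀ n u, F n u ≤ F (n+1) u := fun n u =>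
      ENNReal.toReal_mono (measure_ne_top μ _)
        (measure_mono (Set.inter_subset_inter_left _ (Set.preimage_mono (hAsub n))))
    have hbmono : ∀ u u', u ≤ u' → b u ≤ b u' := fun u u' h =>
      ENNReal.toReal_mono (measure_ne_top μ _)
        (measure_mono (Set.preimage_mono (Set.Iic_subset_Iic.mpr h)))
    have hbq : ∀ k, k ∈ Finset.Icc 1 m → b (q k) ≤ q k := by
      intro k hk
      have h2 := hsuper i hi k hk
      calc b (q k) ≤ (ENNReal.ofReal (α * k / m)).toReal :=
            ENNReal.toReal_mono ENNReal.ofReal_ne_top h2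
        _ = q k := ENNReal.toReal_ofReal (hq0 k)
    have hPRDS : ∀ n : ℕ, F n (q n) * b (q (n+1)) ≤ F n (q (n+1)) * b (q n) :=
      fun n => prds_key μ hmeas hprds hi (hAmeas n) (hAmono n) (hqmono n)
    -- measure of E i k as difference
    have hE : ∀ k : ℕ, 1 ≤ k → (μ (E i k)).toReal = F k (q k) - F (k-1) (q k) := by
      intro k hk1
      have hSsub : Pvec ⁻¹' A (k-1) ∩ p i ⁻¹' Set.Iic (q k)
          ⊆ Pvec ⁻¹' A k ∩ p i ⁻¹' Set.Iic (q k) := by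
        apply Set.inter_subset_inter_left
        apply Set.preimage_mono
        intro x hx
        exact le_trans hx (Nat.sub_le k 1)
      have hSmeas : MeasurableSet (Pvec ⁻¹' A (k-1) ∩ p i ⁻¹' Set.Iic (q k)) :=
        (hPvec (hAmeas _)).inter ((hmeas i) measurableSet_Iic)
      have hEeq : E i k = (Pvec ⁻¹' A k ∩ p i ⁻¹' Set.Iic (q k))
          \ (Pvec ⁻¹' A (k-1) ∩ p i ⁻¹' Set.Iic (q k)) := by
        ext ω
        simp only [hEdef, hAdef, Set.mem_inter_iff, Set.mem_diff, Set.mem_preimage,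
          Set.mem_setOf_eq, Set.mem_Iic, not_and]
        constructor
        · rintro ⟨h1, h2⟩
          refine ⟨⟨le_of_eq h2, h1⟩, fun hcon _ => absurd hcon (by omega)⟩
        · rintro ⟨⟨h1, h2⟩, h3⟩
          refine ⟨h2, ?_⟩
          by_contra hne
          exact h3 (by omega) h2
      rw [hEeq, measure_diff hSsub hSmeas.nullMeasurableSet (measure_ne_top μ _),
        ENNReal.toReal_sub_of_le (measure_mono hSsub) (measure_ne_top μ _)]
    -- induction
    have main : ∀ n, n ≤ m → ∑ k ∈ Finset.Icc 1 n, (μ (E i k)).toReal * (1 / (k:ℝ))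
        ≤ (if b (q n) = 0 then 0 else (α/m) * F n (q n) / b (q n)) := by
      intro n
      induction n with
      | zero =>
        intro _
        rw [show Finset.Icc 1 0 = ∅ from Finset.Icc_eq_empty (by omega), Finset.sum_empty]
        split
        · exact le_refl 0
        · exact div_nonneg (mul_nonneg hc.le (hF0 _ _)) (hb0 _)
      | succ n ih =>
        intro hn1
        have hnm : n ≤ m := le_trans (Nat.le_succ n) hn1
        rw [Finset.sum_Icc_succ_top (Nat.succ_le_succ (Nat.zero_le n))]
        have hterm : (μ (E i (n+1))).toReal = F (n+1) (q (n+1)) - F n (q (n+1)) := by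
          have h2 := hE (n+1) (Nat.succ_le_succ (Nat.zero_le n))
          simpa using h2
        rw [hterm]
        have hd : 0 ≤ F (n+1) (q (n+1)) - F n (q (n+1)) := sub_nonneg.mpr (hFn n _)
        by_cases ha' : b (q (n+1)) = 0
        · rw [if_pos ha']
          have ha0 : b (q n) = 0 :=
            le_antisymm (le_of_le_of_eq (hbmono _ _ (hqmono n)) ha') (hb0 _)
          have hH0 : F (n+1) (q (n+1)) = 0 :=
            le_antisymm (le_of_le_of_eq (hFb _ _) ha') (hF0 _ _)
          have hFm0 : F n (q (n+1)) = 0 :=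
            le_antisymm (le_of_le_of_eq (hFb _ _) ha') (hF0 _ _)
          have hih := ih hnm
          rw [if_pos ha0] at hih
          rw [hH0, hFm0]
          simpa using hih
        · rw [if_neg ha']
          have ha'pos : 0 < b (q (n+1)) := lt_of_le_of_ne (hb0 _) (Ne.symm ha')
          have hq' : b (q (n+1)) ≤ q (n+1) :=
            hbq (n+1) (Finset.mem_Icc.mpr ⟨Nat.succ_le_succ (Nat.zero_le n), hn1⟩)
          have hqval : q (n+1) = (α/m) * ((n:ℝ)+1) := by
            rw [hqdef]; push_cast; ring
          have hnpos : (0:ℝ) < ((n:ℝ)+1) := by positivity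
          have hstep1 : (if b (q n) = 0 then 0 else (α/m) * F n (q n) / b (q n))
              ≤ (α/m) * F n (q (n+1)) / b (q (n+1)) := by
            by_cases ha : b (q n) = 0
            · rw [if_pos ha]
              exact div_nonneg (mul_nonneg hc.le (hF0 _ _)) (hb0 _)
            · rw [if_neg ha]
              have hapos : 0 < b (q n) := lt_of_le_of_ne (hb0 _) (Ne.symm ha)
              rw [div_le_div_iff₀ hapos ha'pos]
              nlinarith [mul_le_mul_of_nonneg_left (hPRDS n) hc.le]
          have hstep2 : (F (n+1) (q (n+1)) - F n (q (n+1))) * (1 / (((n+1:ℕ)):ℝ))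
              ≤ (α/m) * (F (n+1) (q (n+1)) - F n (q (n+1))) / b (q (n+1)) := by
            have hcast : (((n+1:ℕ)):ℝ) = (n:ℝ)+1 := by push_cast; ring
            rw [hcast, mul_one_div, div_le_div_iff₀ hnpos ha'pos]
            have h5 := mul_le_mul_of_nonneg_left (hq'.trans (le_of_eq hqval)) hd
            nlinarith []
          calc ∑ k ∈ Finset.Icc 1 n, (μ (E i k)).toReal * (1 / (k:ℝ))
                + (F (n+1) (q (n+1)) - F n (q (n+1))) * (1 / (((n+1:ℕ)):ℝ))
              ≤ (α/m) * F n (q (n+1)) / b (q (n+1))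
                + (α/m) * (F (n+1) (q (n+1)) - F n (q (n+1))) / b (q (n+1)) :=
                add_le_add ((ih hnm).trans hstep1) hstep2
            _ = (α/m) * F (n+1) (q (n+1)) / b (q (n+1)) := by
                field_simp
                ring
    have hfin := main m (le_refl m)
    by_cases hbm : b (q m) = 0
    · rw [if_pos hbm] at hfin
      exact hfin.trans hc.le
    · rw [if_neg hbm] at hfin
      have hbpos : 0 < b (q m) := lt_of_le_of_ne (hb0 _) (Ne.symm hbm)
      refine hfin.trans ?_
      rw [div_le_iff₀ hbpos]
      calc (α/m) * F m (q m) ≤ (α/m) * b (q m) :=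
            mul_le_mul_of_nonneg_left (hFb _ _) hc.le
        _ = α/m * b (q m) := rfl
  calc ∑ i ∈ H0, ∑ k ∈ Finset.Icc 1 m, (μ (E i k)).toReal * (1 / (k:ℝ))
      ≤ ∑ _i ∈ H0, α / m := Finset.sum_le_sum key
    _ = H0.card * (α / m) := by rw [Finset.sum_const, nsmul_eq_mul]
    _ = m0 * α / m := by rw [hcard]; ring
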